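/- Let A ∈ ℝ^{m×n}, C ∈ ℝ^{p×n}, G = AᵀA + CᵀC. Suppose x ∈ R(G) is a minimizer of ‖Ax−b‖₂ over the set of minimizers of ‖Cx−d‖₂, and so is x' ∈ R(G). Then x = x', i.e., the LSE problem has a unique solution in the range of G, and this solution has minimum Euclidean norm among all solutions. -/

import Mathlib

open Matrix

private lemma midpoint_norm_eq {E : Type*} [NormedAddCommGroup E] [InnerProductSpace ℝ E]
    {a c : E} (hac : ‖a‖ = ‖c‖) (hm : ‖a‖ ≤ ‖(1/2 : ℝ) • (a + c)‖) : a = c := by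
  have hpar := parallelogram_law_with_norm ℝ a c
  have hs : ‖(1/2:ℝ) • (a + c)‖ = ‖a + c‖ / 2 := by
    rw [norm_smul]; simp [abs_of_nonneg]; ring
  have hle : 2 * ‖a‖ ≤ ‖a + c‖ := by
    rw [hs] at hm; linarith
  have h0 : ‖a - c‖ ^ 2 ≤ 0 := by nlinarith [norm_nonneg (a + c), norm_nonneg a]
  have : ‖a - c‖ = 0 := by nlinarith [norm_nonneg (a - c)]
  exact sub_eq_zero.mp (norm_eq_zero.mp this)

private lemma midpoint_norm_eq' {E : Type*} [NormedAddCommGroup E] [InnerProductSpace ℝ E]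
    {a c : E} (hac : ‖a‖ = ‖c‖) (hm : ‖a‖ ≤ ‖(1/2 : ℝ) • (a + c)‖) : a = c :=
  midpoint_norm_eq hac hm

private lemma teL_mul {a b c : ℕ} (M : Matrix (Fin a) (Fin b) ℝ) (N : Matrix (Fin b) (Fin c) ℝ)
    (v : EuclideanSpace ℝ (Fin c)) :
    Matrix.toEuclideanLin (M * N) v = Matrix.toEuclideanLin M (Matrix.toEuclideanLin N v) := by
  simp [Matrix.toEuclideanLin_apply, Matrix.mulVec_mulVec]

/-- The LSE problem has a unique solution in `R(G)`, `G = AᵀA + CᵀC`, and this solution has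
minimum Euclidean norm among all solutions. -/
theorem lse_unique_in_range_G (m n p : ℕ) (A : Matrix (Fin m) (Fin n) ℝ)
    (C : Matrix (Fin p) (Fin n) ℝ) (b : EuclideanSpace ℝ (Fin m)) (d : EuclideanSpace ℝ (Fin p))
    (x x' : EuclideanSpace ℝ (Fin n))
    (hxR : x ∈ LinearMap.range (Matrix.toEuclideanLin (Aᵀ * A + Cᵀ * C)))
    (hx'R : x' ∈ LinearMap.range (Matrix.toEuclideanLin (Aᵀ * A + Cᵀ * C)))
    (hx_feas : ∀ y, ‖Matrix.toEuclideanLin C x - d‖ ≤ ‖Matrix.toEuclideanLin C y - d‖)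
    (hx_min : ∀ y, (∀ z, ‖Matrix.toEuclideanLin C y - d‖ ≤ ‖Matrix.toEuclideanLin C z - d‖) →
      ‖Matrix.toEuclideanLin A x - b‖ ≤ ‖Matrix.toEuclideanLin A y - b‖)
    (hx'_feas : ∀ y, ‖Matrix.toEuclideanLin C x' - d‖ ≤ ‖Matrix.toEuclideanLin C y - d‖)
    (hx'_min : ∀ y, (∀ z, ‖Matrix.toEuclideanLin C y - d‖ ≤ ‖Matrix.toEuclideanLin C z - d‖) →
      ‖Matrix.toEuclideanLin A x' - b‖ ≤ ‖Matrix.toEuclideanLin A y - b‖) :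
    x = x' ∧
    ∀ y, ((∀ z, ‖Matrix.toEuclideanLin C y - d‖ ≤ ‖Matrix.toEuclideanLin C z - d‖) ∧
        (∀ z, (∀ w, ‖Matrix.toEuclideanLin C z - d‖ ≤ ‖Matrix.toEuclideanLin C w - d‖) →
          ‖Matrix.toEuclideanLin A y - b‖ ≤ ‖Matrix.toEuclideanLin A z - b‖)) →
      ‖x‖ ≤ ‖y‖ := by
  set LA := Matrix.toEuclideanLin A with hLA
  set LC := Matrix.toEuclideanLin C with hLC
  set G := Matrix.toEuclideanLin (Aᵀ * A + Cᵀ * C) with hG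
  -- Any two feasible points have the same C-image
  have hCfix : ∀ u v : EuclideanSpace ℝ (Fin n),
      (∀ z, ‖LC u - d‖ ≤ ‖LC z - d‖) → (∀ z, ‖LC v - d‖ ≤ ‖LC z - d‖) → LC u = LC v := by
    intro u v hu hv
    have hac : ‖LC u - d‖ = ‖LC v - d‖ := le_antisymm (hu v) (hv u)
    have hmid : (1/2 : ℝ) • ((LC u - d) + (LC v - d)) = LC ((1/2 : ℝ) • (u + v)) - d := by
      rw [LinearMap.map_smul, LinearMap.map_add]
      module
    have := midpoint_norm_eq hac (by
      rw [hmid]; exact hu _)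
    have := sub_left_injective this
    exact this
  -- Any two optimal points have the same A-image
  have hAfix : ∀ u v : EuclideanSpace ℝ (Fin n),
      (∀ z, ‖LC u - d‖ ≤ ‖LC z - d‖) → (∀ z, ‖LC v - d‖ ≤ ‖LC z - d‖) →
      (∀ z, (∀ w, ‖LC z - d‖ ≤ ‖LC w - d‖) → ‖LA u - b‖ ≤ ‖LA z - b‖) →
      (∀ z, (∀ w, ‖LC z - d‖ ≤ ‖LC w - d‖) → ‖LA v - b‖ ≤ ‖LA z - b‖) →
      LA u = LA v := by
    intro u v hu hv hmu hmv
    have hCuv : LC u = LC v := hCfix u v hu hv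
    have hmidfeas : ∀ z, ‖LC ((1/2 : ℝ) • (u + v)) - d‖ ≤ ‖LC z - d‖ := by
      intro z
      have : LC ((1/2 : ℝ) • (u + v)) = LC u := by
        rw [LinearMap.map_smul, LinearMap.map_add, hCuv]; module
      rw [this]; exact hu z
    have hac : ‖LA u - b‖ = ‖LA v - b‖ := le_antisymm (hmu v hv) (hmv u hu)
    have hmid : (1/2 : ℝ) • ((LA u - b) + (LA v - b)) = LA ((1/2 : ℝ) • (u + v)) - b := by
      rw [LinearMap.map_smul, LinearMap.map_add]
      module
    have := midpoint_norm_eq hac (by rw [hmid]; exact hmu _ hmidfeas)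
    exact sub_left_injective this
  -- symmetry of G
  have hGsym : ∀ u v : EuclideanSpace ℝ (Fin n), inner ℝ (G u) v = (inner ℝ u (G v) : ℝ) := by
    intro u v
    have hadj : G = LinearMap.adjoint G := by
      rw [hG, ← Matrix.toEuclideanLin_conjTranspose_eq_adjoint]
      congr 1
      rw [Matrix.conjTranspose_eq_transpose_of_trivial]
      simp [Matrix.transpose_add, Matrix.transpose_mul]
    conv_lhs => rw [hadj]
    rw [LinearMap.adjoint_inner_left]
  -- kernel fact: if LA w = 0 and LC w = 0 then G w = 0
  have hker : ∀ w : EuclideanSpace ℝ (Fin n), LA w = 0 → LC w = 0 → G w = 0 := by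
    intro w hA hC
    have : G w = Matrix.toEuclideanLin (Aᵀ * A) w + Matrix.toEuclideanLin (Cᵀ * C) w := by
      rw [hG, map_add]; rfl
    rw [this, teL_mul, teL_mul, ← hLA, ← hLC, hA, hC, map_zero, map_zero, add_zero]
  -- main orthogonality: if y is any solution, then ⟪x, x - y⟫ = 0
  have horth : ∀ y : EuclideanSpace ℝ (Fin n),
      (∀ z, ‖LC y - d‖ ≤ ‖LC z - d‖) →
      (∀ z, (∀ w, ‖LC z - d‖ ≤ ‖LC w - d‖) → ‖LA y - b‖ ≤ ‖LA z - b‖) →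
      (inner ℝ x (x - y) : ℝ) = 0 := by
    intro y hyf hym
    obtain ⟨w, hw⟩ := hxR
    have hAe : LA x = LA y := hAfix x y hx_feas hyf hx_min hym
    have hCe : LC x = LC y := hCfix x y hx_feas hyf
    have hG0 : G (x - y) = 0 := hker _ (by rw [map_sub, hAe, sub_self]) (by rw [map_sub, hCe, sub_self])
    calc (inner ℝ x (x - y) : ℝ) = inner ℝ (G w) (x - y) := by rw [hw]
      _ = inner ℝ w (G (x - y)) := hGsym w (x - y)
      _ = 0 := by rw [hG0, inner_zero_right]
  constructor
  · -- uniqueness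
    obtain ⟨w, hw⟩ := hxR
    obtain ⟨w', hw'⟩ := hx'R
    have h1 : (inner ℝ x (x - x') : ℝ) = 0 := horth x' hx'_feas hx'_min
    have h2 : (inner ℝ x' (x - x') : ℝ) = 0 := by
      have hAe : LA x = LA x' := hAfix x x' hx_feas hx'_feas hx_min hx'_min
      have hCe : LC x = LC x' := hCfix x x' hx_feas hx'_feas
      have hG0 : G (x - x') = 0 := hker _ (by rw [map_sub, hAe, sub_self])
        (by rw [map_sub, hCe, sub_self])
      calc (inner ℝ x' (x - x') : ℝ) = inner ℝ (G w') (x - x') := by rw [hw']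
        _ = inner ℝ w' (G (x - x')) := hGsym w' (x - x')
        _ = 0 := by rw [hG0, inner_zero_right]
    have : (inner ℝ (x - x') (x - x') : ℝ) = 0 := by
      rw [inner_sub_left, h1, h2, sub_zero]
    have := inner_self_eq_zero.mp this
    exact sub_eq_zero.mp this
  · -- minimum norm
    intro y ⟨hyf, hym⟩
    have h0 : (inner ℝ x (x - y) : ℝ) = 0 := horth y hyf hym
    have hxy : (inner ℝ x y : ℝ) = ‖x‖ ^ 2 := by
      have := h0
      rw [inner_sub_right, real_inner_self_eq_norm_sq] at this
      linarith
    have hcs : (inner ℝ x y : ℝ) ≤ ‖x‖ * ‖y‖ := real_inner_le_norm x y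
    nlinarith [norm_nonneg x, norm_nonneg y]
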